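/- Let G be a finite connected cograph. Then μ(G) = μt(G) if and only if G has a universal vertex or G has no enabling vertex. -/

import Mathlib

open SimpleGraph

/-- Vertices `x` and `y` are `X`-visible in `G`: some shortest `x,y`-path has
no internal vertex in `X`. -/
def Visible {V : Type*} (G : SimpleGraph V) (X : Set V) (x y : V) : Prop :=
  ∃ p : G.Walk x y, p.length = G.dist x y ∧ ∀ v ∈ p.support, v ∈ X → v = x ∨ v = y

/-- `X` is a mutual-visibility set of `G`: every two vertices of `X` are `X`-visible. -/
def IsMVSet {V : Type*} (G : SimpleGraph V) (X : Set V) : Prop :=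
  ∀ x ∈ X, ∀ y ∈ X, Visible G X x y

/-- `X` is a total mutual-visibility set of `G`: every two vertices of `G` are
`X`-visible. -/
def IsTMVSet {V : Type*} (G : SimpleGraph V) (X : Set V) : Prop :=
  ∀ x y : V, Visible G X x y

/-- The mutual-visibility number of `G`: the maximum cardinality of a
mutual-visibility set. -/
noncomputable def mu {V : Type*} (G : SimpleGraph V) : ℕ :=
  sSup {n | ∃ X : Set V, IsMVSet G X ∧ X.ncard = n}

/-- The total mutual-visibility number of `G`: the maximum cardinality of a total
mutual-visibility set. -/
noncomputable def muT {V : Type*} (G : SimpleGraph V) : ℕ :=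
  sSup {n | ∃ X : Set V, IsTMVSet G X ∧ X.ncard = n}

/-- A feasible total mutual-visibility set: a total mutual-visibility set `S` such that
any two adjacent vertices of `S` have a common neighbor outside `S`. -/
def IsFeasibleTMVSet {V : Type*} (G : SimpleGraph V) (S : Set V) : Prop :=
  IsTMVSet G S ∧ ∀ x ∈ S, ∀ y ∈ S, G.Adj x y → ∃ z ∉ S, G.Adj x z ∧ G.Adj y z

/-- The strong product of two simple graphs. -/
def strongProd {α β : Type*} (G : SimpleGraph α) (H : SimpleGraph β) :
    SimpleGraph (α × β) where
  Adj x y := (G.Adj x.1 y.1 ∧ x.2 = y.2) ∨ (x.1 = y.1 ∧ H.Adj x.2 y.2) ∨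
    (G.Adj x.1 y.1 ∧ H.Adj x.2 y.2)
  symm := ⟨by
    rintro ⟨a, b⟩ ⟨c, d⟩ (⟨h1, h2⟩ | ⟨h1, h2⟩ | ⟨h1, h2⟩)
    · exact Or.inl ⟨h1.symm, h2.symm⟩
    · exact Or.inr (Or.inl ⟨h1.symm, h2.symm⟩)
    · exact Or.inr (Or.inr ⟨h1.symm, h2.symm⟩)⟩
  loopless := ⟨by
    rintro ⟨a, b⟩ (⟨h, _⟩ | ⟨_, h⟩ | ⟨h, _⟩)
    · exact G.loopless.irrefl a h
    · exact H.loopless.irrefl b h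
    · exact G.loopless.irrefl a h⟩

/-- The iterated (associative) strong product of a finite family of graphs:
two tuples are adjacent iff they are distinct and agree or are adjacent in every
coordinate. -/
def strongProdPi {k : ℕ} {V : Fin k → Type*} (G : ∀ i, SimpleGraph (V i)) :
    SimpleGraph (∀ i, V i) where
  Adj x y := x ≠ y ∧ ∀ i, x i = y i ∨ (G i).Adj (x i) (y i)
  symm := ⟨by
    rintro x y ⟨hne, h⟩
    exact ⟨hne.symm, fun i => (h i).imp Eq.symm fun hh => (G i).adj_symm hh⟩⟩
  loopless := ⟨fun x h => h.1 rfl⟩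

/-- A universal vertex: adjacent to all other vertices. -/
def IsUniversal {V : Type*} (G : SimpleGraph V) (v : V) : Prop :=
  ∀ u : V, u ≠ v → G.Adj v u

/-- A cut vertex: its removal disconnects the graph. -/
def IsCutVertex {V : Type*} (G : SimpleGraph V) (v : V) : Prop :=
  ¬ (G.induce ({v}ᶜ : Set V)).Preconnected

/-- An induced path: a path with no chords between its vertices. -/
def IsInducedPath {V : Type*} (G : SimpleGraph V) {u v : V} (p : G.Walk u v) : Prop :=
  p.IsPath ∧ ∀ a b : V, a ∈ p.support → b ∈ p.support → G.Adj a b → s(a, b) ∈ p.edges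

/-- A block graph: a connected graph in which every pair of vertices is joined
by a unique induced path. -/
def IsBlockGraph {V : Type*} (G : SimpleGraph V) : Prop :=
  G.Connected ∧ ∀ u v : V, ∃! p : G.Walk u v, IsInducedPath G p

/-- A convex set of vertices: every shortest path of `G` between two of its
vertices stays inside the set. -/
def IsConvexSet {V : Type*} (G : SimpleGraph V) (A : Set V) : Prop :=
  ∀ x ∈ A, ∀ y ∈ A, ∀ p : G.Walk x y, p.length = G.dist x y → ∀ v ∈ p.support, v ∈ A

/-- A cactus graph: a connected graph in which every edge lies in at most one cycle,
i.e. two cycles sharing an edge have the same edge set. -/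
def IsCactus {V : Type*} (G : SimpleGraph V) : Prop :=
  G.Connected ∧ ∀ (v : V) (p q : G.Walk v v), p.IsCycle → q.IsCycle →
    ∀ e, e ∈ p.edges → e ∈ q.edges → ∀ e', e' ∈ p.edges ↔ e' ∈ q.edges

/-- A cograph: obtained from a single vertex by repeatedly adding twins, i.e. there is
an enumeration of the vertices in which every vertex except the first is, at the
moment of its addition, a (true or false) twin of some earlier vertex in the induced
subgraph on the vertices added so far. -/
def IsCograph {V : Type*} (G : SimpleGraph V) : Prop :=
  ∃ l : List V, l.Nodup ∧ (∀ v : V, v ∈ l) ∧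
    ∀ i : Fin l.length, (i : ℕ) ≠ 0 →
      ∃ j : Fin l.length, (j : ℕ) < (i : ℕ) ∧
        ∀ z ∈ l.take ((i : ℕ) + 1), z ≠ l.get i → z ≠ l.get j →
          (G.Adj (l.get i) z ↔ G.Adj (l.get j) z)

/-- An enabling vertex: a vertex `v` adjacent to every vertex `u` of `G - v` whose
degree in `G - v` is less than `n(G) - 2`. -/
def IsEnabling {V : Type*} [Fintype V] (G : SimpleGraph V) (v : V) : Prop :=
  ∀ u : V, u ≠ v → (G.neighborSet u \ {v}).ncard < Fintype.card V - 2 → G.Adj v u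


section Aux

open scoped Classical
set_option linter.unusedSectionVars false

variable {V : Type*}

/-! ### Basic visibility lemmas -/

lemma visible_self {G : SimpleGraph V} {X : Set V} {x : V} : Visible G X x x :=
  ⟨SimpleGraph.Walk.nil, by simp [SimpleGraph.dist_self], by simp⟩

lemma visible_of_adj {G : SimpleGraph V} {X : Set V} {x y : V} (h : G.Adj x y) :
    Visible G X x y := by
  refine ⟨h.toWalk, ?_, ?_⟩
  · simp [SimpleGraph.dist_eq_one_iff_adj.mpr h]
  · intro v hv _
    simpa using hv

lemma visible_of_common {G : SimpleGraph V} {X : Set V} {x y c : V}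
    (h1 : G.Adj x c) (h2 : G.Adj c y) (hne : x ≠ y) (hna : ¬ G.Adj x y)
    (hc : c ∉ X) : Visible G X x y := by
  refine ⟨Walk.cons h1 (Walk.cons h2 Walk.nil), ?_, ?_⟩
  · have hr : G.Reachable x y := ⟨Walk.cons h1 (Walk.cons h2 Walk.nil)⟩
    have hle : G.dist x y ≤ 2 := by
      simpa using SimpleGraph.dist_le (Walk.cons h1 (Walk.cons h2 Walk.nil))
    have h0 : 0 < G.dist x y := hr.pos_dist_of_ne hne
    have h1' : G.dist x y ≠ 1 := fun h => hna (SimpleGraph.dist_eq_one_iff_adj.mp h)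
    simp only [Walk.length_cons, Walk.length_nil]
    omega
  · intro v hv hvX
    simp only [Walk.support_cons, Walk.support_nil, List.mem_cons] at hv
    rcases hv with rfl | rfl | rfl | h
    · exact Or.inl rfl
    · exact absurd hvX hc
    · exact Or.inr rfl
    · simp at h

lemma not_visible {G : SimpleGraph V} {X : Set V} {x y z : V}
    (hne : x ≠ y) (hna : ¬ G.Adj x y) (hX : ∀ w, w ∉ X → w = z)
    (hz1 : ¬ G.Adj x z) : ¬ Visible G X x y := by
  rintro ⟨p, hlen, hsup⟩
  cases p with
  | nil => exact hne rfl
  | @cons _ w _ h q =>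
    have hwmem : w ∈ (Walk.cons h q).support := by
      simp [Walk.support_cons, q.start_mem_support]
    by_cases hw : w ∈ X
    · rcases hsup w hwmem hw with rfl | rfl
      · exact G.irrefl h
      · exact hna h
    · exact hz1 ((hX w hw) ▸ h)

/-! ### sSup plumbing -/

lemma ncard_le_card [Fintype V] (X : Set V) : X.ncard ≤ Fintype.card V := by
  have := Set.ncard_le_ncard (Set.subset_univ X) Set.finite_univ
  simpa [Set.ncard_univ, Nat.card_eq_fintype_card] using this

lemma mv_bddAbove [Fintype V] {G : SimpleGraph V} :
    BddAbove {n | ∃ X : Set V, IsMVSet G X ∧ X.ncard = n} := by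
  refine ⟨Fintype.card V, ?_⟩
  rintro n ⟨X, _, rfl⟩
  exact ncard_le_card X

lemma tmv_bddAbove [Fintype V] {G : SimpleGraph V} :
    BddAbove {n | ∃ X : Set V, IsTMVSet G X ∧ X.ncard = n} := by
  refine ⟨Fintype.card V, ?_⟩
  rintro n ⟨X, _, rfl⟩
  exact ncard_le_card X

lemma isMVSet_of_isTMVSet {G : SimpleGraph V} {X : Set V} (h : IsTMVSet G X) : IsMVSet G X :=
  fun x _ y _ => h x y

lemma isMVSet_empty {G : SimpleGraph V} : IsMVSet G (∅ : Set V) :=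
  fun x hx => absurd hx (Set.notMem_empty x)

lemma isTMVSet_empty {G : SimpleGraph V} (hG : G.Connected) : IsTMVSet G (∅ : Set V) := by
  intro x y
  obtain ⟨p, hp⟩ := (hG x y).exists_walk_length_eq_dist
  exact ⟨p, hp, fun v _ hv => absurd hv (Set.notMem_empty v)⟩

lemma muT_le_mu [Fintype V] {G : SimpleGraph V} (hG : G.Connected) : muT G ≤ mu G := by
  refine csSup_le_csSup mv_bddAbove ⟨0, ∅, isTMVSet_empty hG, by simp⟩ ?_
  rintro n ⟨X, hX, rfl⟩
  exact ⟨X, isMVSet_of_isTMVSet hX, rfl⟩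

lemma le_muT [Fintype V] {G : SimpleGraph V} {X : Set V} (h : IsTMVSet G X) :
    X.ncard ≤ muT G :=
  le_csSup tmv_bddAbove ⟨X, h, rfl⟩

lemma le_mu [Fintype V] {G : SimpleGraph V} {X : Set V} (h : IsMVSet G X) :
    X.ncard ≤ mu G :=
  le_csSup mv_bddAbove ⟨X, h, rfl⟩

lemma mu_le [Fintype V] {G : SimpleGraph V} {m : ℕ}
    (h : ∀ X : Set V, IsMVSet G X → X.ncard ≤ m) : mu G ≤ m := by
  refine csSup_le ⟨0, ∅, isMVSet_empty, by simp⟩ ?_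
  rintro n ⟨X, hX, rfl⟩
  exact h X hX

lemma muT_le [Fintype V] {G : SimpleGraph V} {m : ℕ} (hG : G.Connected)
    (h : ∀ X : Set V, IsTMVSet G X → X.ncard ≤ m) : muT G ≤ m := by
  refine csSup_le ⟨0, ∅, isTMVSet_empty hG, by simp⟩ ?_
  rintro n ⟨X, hX, rfl⟩
  exact h X hX

/-! ### Cograph: complement is disconnected -/

def stepRel (G : SimpleGraph V) (S : Set V) (a b : V) : Prop := a ∈ S ∧ b ∈ S ∧ G.Adj a b

def ConnOn (G : SimpleGraph V) (S : Set V) : Prop :=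
  ∀ a ∈ S, ∀ b ∈ S, Relation.ReflTransGen (stepRel G S) a b

lemma step_reroute {G : SimpleGraph V} {S : Set V} {u v : V} (hu : u ∈ S) (hv : v ∉ S)
    (htwin : ∀ z ∈ S, z ≠ u → (G.Adj v z ↔ G.Adj u z)) {b c : V}
    (h : stepRel G (insert v S) b c) :
    Relation.ReflTransGen (stepRel G S) (if b = v then u else b) (if c = v then u else c) := by
  obtain ⟨hb, hc, hadj⟩ := h
  rcases Set.mem_insert_iff.mp hb with rfl | hbS
  · rcases Set.mem_insert_iff.mp hc with rfl | hcS
    · exact absurd hadj (G.irrefl)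
    · have hcv : c ≠ b := fun h => hv (h ▸ hcS)
      rw [if_pos rfl, if_neg hcv]
      by_cases hcu : c = u
      · subst hcu; exact Relation.ReflTransGen.refl
      · exact Relation.ReflTransGen.single ⟨hu, hcS, (htwin c hcS hcu).mp hadj⟩
  · have hbv : b ≠ v := fun h => hv (h ▸ hbS)
    rcases Set.mem_insert_iff.mp hc with rfl | hcS
    · rw [if_neg hbv, if_pos rfl]
      by_cases hbu : b = u
      · subst hbu; exact Relation.ReflTransGen.refl
      · exact Relation.ReflTransGen.single ⟨hbS, hu, ((htwin b hbS hbu).mp hadj.symm).symm⟩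
    · have hcv : c ≠ v := fun h => hv (h ▸ hcS)
      rw [if_neg hbv, if_neg hcv]
      exact Relation.ReflTransGen.single ⟨hbS, hcS, hadj⟩

lemma reroute {G : SimpleGraph V} {S : Set V} {u v : V} (hu : u ∈ S) (hv : v ∉ S)
    (htwin : ∀ z ∈ S, z ≠ u → (G.Adj v z ↔ G.Adj u z)) {a b : V}
    (h : Relation.ReflTransGen (stepRel G (insert v S)) a b) :
    Relation.ReflTransGen (stepRel G S) (if a = v then u else a) (if b = v then u else b) := by
  induction h with
  | refl => exact Relation.ReflTransGen.refl
  | tail _ h2 ih => exact ih.trans (step_reroute hu hv htwin h2)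

lemma notConnOn_insert {G : SimpleGraph V} {S : Set V} {u v : V} (hu : u ∈ S) (hv : v ∉ S)
    (htwin : ∀ z ∈ S, z ≠ u → (G.Adj v z ↔ G.Adj u z))
    (h : ¬ ConnOn G S) : ¬ ConnOn G (insert v S) := by
  intro hcon
  apply h
  intro a ha b hb
  have hav : a ≠ v := fun h => hv (h ▸ ha)
  have hbv : b ≠ v := fun h => hv (h ▸ hb)
  have := reroute hu hv htwin (hcon a (Set.mem_insert_of_mem _ ha) b (Set.mem_insert_of_mem _ hb))
  rwa [if_neg hav, if_neg hbv] at this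

lemma notConnOn_pair {G : SimpleGraph V} {a b : V} (hne : a ≠ b) (hna : ¬ G.Adj a b) :
    ¬ ConnOn G {a, b} := by
  intro h
  have key : ∀ x y : V, Relation.ReflTransGen (stepRel G ({a, b} : Set V)) x y → x = y := by
    intro x y h
    induction h with
    | refl => rfl
    | tail _ h2 ih =>
      obtain ⟨h1, h2', hadj⟩ := h2
      simp only [Set.mem_insert_iff, Set.mem_singleton_iff] at h1 h2'
      rcases h1 with rfl | rfl <;> rcases h2' with rfl | rfl
      · exact absurd hadj (G.irrefl)
      · exact absurd hadj hna
      · exact absurd hadj.symm hna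
      · exact absurd hadj (G.irrefl)
  exact hne (key a b (h a (by simp) b (by simp)))

lemma connOn_univ_of_reachable {G : SimpleGraph V} {a b : V} (h : G.Reachable a b) :
    Relation.ReflTransGen (stepRel G (Set.univ : Set V)) a b := by
  obtain ⟨p⟩ := h
  induction p with
  | nil => exact Relation.ReflTransGen.refl
  | cons h p ih => exact Relation.ReflTransGen.head ⟨trivial, trivial, h⟩ ih

lemma cograph_compl_not_connected [Fintype V] {G : SimpleGraph V} (hG : G.Connected)
    (hcog : IsCograph G) (hcard : 2 ≤ Fintype.card V) :
    ∃ a b : V, a ≠ b ∧ ¬ Gᶜ.Reachable a b := by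
  obtain ⟨l, hnd, hall, htw⟩ := hcog
  obtain ⟨w0⟩ := hG.nonempty
  have main : ∀ i, i ≤ l.length →
      ¬ ConnOn G {x | x ∈ l.take i} ∨ ¬ ConnOn Gᶜ {x | x ∈ l.take i} ∨
        ∃ w : V, {x | x ∈ l.take i} ⊆ {w} := by
    intro i
    induction i with
    | zero => intro _; exact Or.inr (Or.inr ⟨w0, by simp⟩)
    | succ i ih =>
      intro hi1
      have hi : i < l.length := hi1
      set v : V := l.get ⟨i, hi⟩ with hvdef
      have hvelem : l[i] = v := rfl
      have htake : l.take (i + 1) = l.take i ++ [v] := by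
        rw [List.take_succ, List.getElem?_eq_getElem hi]; rfl
      have hsetins : {x | x ∈ l.take (i+1)} = insert v {x | x ∈ l.take i} := by
        ext z
        simp only [Set.mem_setOf_eq, htake, List.mem_append, List.mem_singleton,
          Set.mem_insert_iff]
        tauto
      have hvnotmem : v ∉ {x | x ∈ l.take i} := by
        intro hmem
        simp only [Set.mem_setOf_eq] at hmem
        obtain ⟨j, hj, hjeq⟩ := List.getElem_of_mem hmem
        have hjlt : j < i := lt_of_lt_of_le hj (by simp [List.length_take])
        rw [List.getElem_take] at hjeq
        rw [← hvelem] at hjeq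
        have := (hnd.getElem_inj_iff).mp hjeq
        omega
      rcases Nat.eq_zero_or_pos i with rfl | hipos
      · refine Or.inr (Or.inr ⟨v, ?_⟩)
        rw [hsetins]
        simp
      · obtain ⟨j, hjlt, htwin0⟩ := htw ⟨i, hi⟩ (by simpa using Nat.pos_iff_ne_zero.mp hipos)
        set u : V := l.get j with hudef
        have huS : u ∈ {x | x ∈ l.take i} := by
          simp only [Set.mem_setOf_eq]
          have hji : (j : ℕ) < i := hjlt
          have hjl : (j : ℕ) < (l.take i).length := by
            rw [List.length_take]
            exact lt_min hji j.isLt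
          have : (l.take i)[(j : ℕ)]'hjl = l[(j : ℕ)] := List.getElem_take
          rw [hudef, List.get_eq_getElem, ← this]
          exact List.getElem_mem _
        have htwinG : ∀ z ∈ {x | x ∈ l.take i}, z ≠ u → (G.Adj v z ↔ G.Adj u z) := by
          intro z hz hzu
          have hz1 : z ∈ l.take (i+1) := by rw [htake]; exact List.mem_append_left _ hz
          have hzv : z ≠ v := fun h => hvnotmem (h ▸ hz)
          exact htwin0 z hz1 hzv hzu
        have htwinC : ∀ z ∈ {x | x ∈ l.take i}, z ≠ u → (Gᶜ.Adj v z ↔ Gᶜ.Adj u z) := by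
          intro z hz hzu
          have hzv : z ≠ v := fun h => hvnotmem (h ▸ hz)
          rw [compl_adj, compl_adj]
          constructor
          · rintro ⟨-, hna⟩
            exact ⟨Ne.symm hzu, fun h => hna ((htwinG z hz hzu).mpr h)⟩
          · rintro ⟨-, hna⟩
            exact ⟨Ne.symm hzv, fun h => hna ((htwinG z hz hzu).mp h)⟩
        rcases ih (le_of_lt hi) with h1 | h2 | ⟨w, hw⟩
        · left; rw [hsetins]; exact notConnOn_insert huS hvnotmem htwinG h1
        · right; left; rw [hsetins]; exact notConnOn_insert huS hvnotmem htwinC h2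
        · by_cases hwS : w ∈ {x | x ∈ l.take i}
          · have hSw : {x | x ∈ l.take i} = {w} := Set.Subset.antisymm hw
              (Set.singleton_subset_iff.mpr hwS)
            have hvw : v ≠ w := fun h => hvnotmem (hSw ▸ (h ▸ rfl : v ∈ ({w} : Set V)))
            rw [hsetins, hSw]
            by_cases hadj : G.Adj v w
            · right; left
              refine notConnOn_pair hvw ?_
              rw [compl_adj]
              push_neg
              intro _; exact hadj
            · left; exact notConnOn_pair hvw hadj
          · refine Or.inr (Or.inr ⟨v, ?_⟩)
            rw [hsetins]
            intro z hz
            rcases hz with rfl | hzS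
            · rfl
            · exact absurd ((hw hzS : z ∈ ({w} : Set V)) ▸ hzS) hwS
  have hfin := main l.length (le_refl _)
  have huniv : {x | x ∈ l.take l.length} = Set.univ := by
    rw [List.take_length]
    exact Set.eq_univ_of_forall fun x => hall x
  rw [huniv] at hfin
  rcases hfin with h1 | h2 | ⟨w, hw⟩
  · exact absurd (fun a _ b _ => connOn_univ_of_reachable (hG a b)) h1
  · rw [ConnOn] at h2; push_neg at h2
    obtain ⟨a, -, b, -, hab⟩ := h2
    refine ⟨a, b, ?_, ?_⟩
    · rintro rfl; exact hab Relation.ReflTransGen.refl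
    · intro hr; exact hab (connOn_univ_of_reachable hr)
  · have h1 : Fintype.card V ≤ 1 := Fintype.card_le_one_iff.mpr fun a b => by
      have ha := hw (Set.mem_univ a)
      have hb := hw (Set.mem_univ b)
      simp only [Set.mem_singleton_iff] at ha hb
      rw [ha, hb]
    omega

/-! ### Main combinatorial lemmas -/

lemma mv_compl_enabling [Fintype V] {G : SimpleGraph V} {v : V}
    (hv : IsEnabling G v) : IsMVSet G ({v}ᶜ : Set V) := by
  intro x hx y hy
  rcases eq_or_ne x y with rfl | hxy
  · exact visible_self
  by_cases hadj : G.Adj x y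
  · exact visible_of_adj hadj
  have hxv : x ≠ v := by simpa using hx
  have hyv : y ≠ v := by simpa using hy
  have key : ∀ a b : V, a ≠ b → ¬ G.Adj a b → a ≠ v → b ≠ v → G.Adj v a := by
    intro a b hab hnadj hav hbv
    apply hv a hav
    have hsub : G.neighborSet a \ {v} ⊆ (Set.univ \ {a, b, v} : Set V) := by
      rintro t ⟨ht1, ht2⟩
      refine ⟨trivial, ?_⟩
      simp only [Set.mem_insert_iff, Set.mem_singleton_iff, not_or]
      exact ⟨fun h => G.irrefl (h ▸ ht1), fun h => hnadj (h ▸ ht1), by simpa using ht2⟩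
    have hle := Set.ncard_le_ncard hsub (Set.toFinite _)
    have h3 : ({a, b, v} : Set V).ncard = 3 :=
      Set.ncard_eq_three.mpr ⟨a, b, v, hab, hav, hbv, rfl⟩
    have hc3 : 3 ≤ Fintype.card V := by
      have := Set.ncard_le_ncard (Set.subset_univ ({a, b, v} : Set V)) Set.finite_univ
      rwa [h3, Set.ncard_univ, Nat.card_eq_fintype_card] at this
    have heq : (Set.univ \ {a, b, v} : Set V).ncard = Fintype.card V - 3 := by
      rw [Set.ncard_diff (Set.subset_univ _), Set.ncard_univ, Nat.card_eq_fintype_card, h3]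
    omega
  have hax : G.Adj v x := key x y hxy hadj hxv hyv
  have hay : G.Adj v y := key y x hxy.symm (fun h => hadj h.symm) hyv hxv
  exact visible_of_common hax.symm hay hxy hadj (by simp)

lemma exists_absorb [Fintype V] {X : Set V} (hbig : Fintype.card V - 2 < X.ncard) :
    ∃ x : V, (∀ w, w ∉ X → w = x) := by
  have hle := ncard_le_card X
  have hXc : Xᶜ.ncard ≤ 1 := by
    have hadd := Set.ncard_add_ncard_compl X
    rw [Nat.card_eq_fintype_card] at hadd
    omega
  rcases Set.eq_empty_or_nonempty (Xᶜ) with he | ⟨z, hz⟩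
  · have hXne : X.Nonempty := by
      rw [← Set.ncard_pos]
      omega
    obtain ⟨x0, _⟩ := hXne
    refine ⟨x0, fun w hw => ?_⟩
    exact absurd (show w ∈ (∅ : Set V) from he ▸ hw) (Set.notMem_empty w)
  · exact ⟨z, fun w hw => (Set.ncard_le_one (Set.toFinite _)).mp hXc w hw z hz⟩

lemma tmv_card_le_of_no_universal [Fintype V] {G : SimpleGraph V}
    (hnu : ∀ v, ¬ _root_.IsUniversal G v) {X : Set V} (hX : IsTMVSet G X) :
    X.ncard ≤ Fintype.card V - 2 := by
  by_contra hbig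
  push_neg at hbig
  obtain ⟨x, hx⟩ := exists_absorb hbig
  have hnux := hnu x
  rw [_root_.IsUniversal] at hnux
  push_neg at hnux
  obtain ⟨y, hyx, hny⟩ := hnux
  exact not_visible (Ne.symm hyx) hny hx (G.irrefl) (hX x y)

lemma mv_card_le_of_no_enabling [Fintype V] {G : SimpleGraph V}
    (hen : ∀ v, ¬ IsEnabling G v) {X : Set V} (hX : IsMVSet G X) :
    X.ncard ≤ Fintype.card V - 2 := by
  by_contra hbig
  push_neg at hbig
  have hle := ncard_le_card X
  rcases Set.eq_empty_or_nonempty (Xᶜ) with he | ⟨z, hz⟩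
  · have hXuniv : ∀ w, w ∈ X := fun w => by
      by_contra hw
      exact (Set.notMem_empty w) (he ▸ (hw : w ∈ Xᶜ))
    have hXne : X.Nonempty := by
      rw [← Set.ncard_pos]
      omega
    obtain ⟨x0, _⟩ := hXne
    have henx := hen x0
    rw [IsEnabling] at henx
    push_neg at henx
    obtain ⟨u, hux, _, hnadj⟩ := henx
    exact not_visible hux (fun h => hnadj h.symm) (fun w hw => absurd (hXuniv w) hw)
      (G.irrefl) (hX u (hXuniv u) x0 (hXuniv x0))
  · have hXc1 : Xᶜ.ncard ≤ 1 := by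
      have hadd := Set.ncard_add_ncard_compl X
      rw [Nat.card_eq_fintype_card] at hadd
      omega
    have habs : ∀ w, w ∉ X → w = z := fun w hw =>
      (Set.ncard_le_one (Set.toFinite _)).mp hXc1 w hw z hz
    have henz := hen z
    rw [IsEnabling] at henz
    push_neg at henz
    obtain ⟨u, huz, hdeg, hnadj⟩ := henz
    have hy : ∃ y, y ≠ u ∧ y ≠ z ∧ ¬ G.Adj u y := by
      by_contra hno
      push_neg at hno
      have hsub : (Set.univ \ {u, z} : Set V) ⊆ G.neighborSet u \ {z} := by
        rintro t ⟨-, ht⟩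
        simp only [Set.mem_insert_iff, Set.mem_singleton_iff, not_or] at ht
        exact ⟨hno t ht.1 ht.2, by simp [ht.2]⟩
      have hle2 := Set.ncard_le_ncard hsub (Set.toFinite _)
      rw [Set.ncard_diff (Set.subset_univ _), Set.ncard_univ, Nat.card_eq_fintype_card,
        Set.ncard_pair huz] at hle2
      omega
    obtain ⟨y, hyu, hyz, hnuy⟩ := hy
    have huX : u ∈ X := by
      by_contra h
      exact huz (habs u h)
    have hyX : y ∈ X := by
      by_contra h
      exact hyz (habs y h)
    exact not_visible (Ne.symm hyu) hnuy habs (fun h => hnadj h.symm) (hX u huX y hyX)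

lemma tmv_big {G : SimpleGraph V} {a b : V}
    (hr : ¬ Gᶜ.Reachable a b) : IsTMVSet G (({a, b} : Set V)ᶜ) := by
  have hadjof : ∀ c x : V, ¬ Gᶜ.Reachable c x → G.Adj c x := by
    intro c x hnr
    by_contra hn
    rcases eq_or_ne c x with rfl | hcx
    · exact hnr (Reachable.refl c)
    · exact hnr (SimpleGraph.Adj.reachable ((compl_adj G c x).mpr ⟨hcx, hn⟩))
  intro x y
  rcases eq_or_ne x y with rfl | hne
  · exact visible_self
  by_cases hadj : G.Adj x y
  · exact visible_of_adj hadj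
  have hcadj : Gᶜ.Adj x y := (compl_adj G x y).mpr ⟨hne, hadj⟩
  by_cases hra : Gᶜ.Reachable a x
  · have hnbx : ¬ Gᶜ.Reachable b x := fun h => hr (hra.trans h.symm)
    have hnby : ¬ Gᶜ.Reachable b y := fun h => hnbx (h.trans hcadj.symm.reachable)
    exact visible_of_common (hadjof b x hnbx).symm (hadjof b y hnby) hne hadj (by simp)
  · have hnay : ¬ Gᶜ.Reachable a y := fun h => hra (h.trans hcadj.reachable.symm)
    exact visible_of_common (hadjof a x hra).symm (hadjof a y hnay) hne hadj (by simp)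

lemma mu_le_muT_of_universal [Fintype V] {G : SimpleGraph V}
    {w : V} (hw : _root_.IsUniversal G w) : mu G ≤ muT G := by
  by_cases hcomp : ∀ x y : V, x ≠ y → G.Adj x y
  · have htmv : IsTMVSet G (Set.univ : Set V) := by
      intro x y
      rcases eq_or_ne x y with rfl | hne
      · exact visible_self
      · exact visible_of_adj (hcomp x y hne)
    have h1 : Fintype.card V ≤ muT G := by
      have := le_muT htmv
      rwa [Set.ncard_univ, Nat.card_eq_fintype_card] at this
    exact le_trans (mu_le fun X _ => ncard_le_card X) h1
  · push_neg at hcomp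
    obtain ⟨p, q, hpq, hnadj⟩ := hcomp
    refine mu_le fun X hX => ?_
    have hzex : ∃ z, z ∉ X := by
      by_cases hpX : p ∈ X
      · by_cases hqX : q ∈ X
        · obtain ⟨pw, hlen, hsup⟩ := hX p hpX q hqX
          cases pw with
          | nil => exact absurd rfl hpq
          | @cons _ w1 _ h qw =>
            refine ⟨w1, fun hmem => ?_⟩
            have hw1mem : w1 ∈ (Walk.cons h qw).support := by
              simp [Walk.support_cons, qw.start_mem_support]
            rcases hsup w1 hw1mem hmem with rfl | rfl
            · exact G.irrefl h
            · exact hnadj h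
        · exact ⟨q, hqX⟩
      · exact ⟨p, hpX⟩
    obtain ⟨z, hzX⟩ := hzex
    have hvis : ∀ Y : Set V, w ∉ Y → IsTMVSet G Y := by
      intro Y hwY x y
      rcases eq_or_ne x y with rfl | hne
      · exact visible_self
      by_cases hadj : G.Adj x y
      · exact visible_of_adj hadj
      have hxw : x ≠ w := by
        rintro rfl
        exact hadj ((hw y (Ne.symm hne)).symm.symm)
      have hyw : y ≠ w := by
        rintro rfl
        exact hadj (hw x hxw).symm
      exact visible_of_common (hw x hxw).symm (hw y hyw) hne hadj hwY
    by_cases hwX : w ∈ X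
    · have hzw : z ≠ w := fun h => hzX (h ▸ hwX)
      have hwY : w ∉ insert z (X \ {w}) := by
        intro h
        rcases Set.mem_insert_iff.mp h with h | h
        · exact hzw h.symm
        · exact h.2 rfl
      have hcardY : (insert z (X \ {w})).ncard = X.ncard := by
        have hz' : z ∉ X \ {w} := fun h => hzX h.1
        rw [Set.ncard_insert_of_notMem hz' (Set.toFinite _),
          Set.ncard_diff_singleton_of_mem hwX]
        have hpos : 0 < X.ncard := (Set.ncard_pos (Set.toFinite _)).mpr ⟨w, hwX⟩
        omega
      calc X.ncard = (insert z (X \ {w})).ncard := hcardY.symm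
        _ ≤ muT G := le_muT (hvis _ hwY)
    · exact le_muT (hvis X hwX)

end Aux

theorem stmt_4 {V : Type*} [Fintype V] (G : SimpleGraph V) (hG : G.Connected)
    (hcog : IsCograph G) :
    mu G = muT G ↔ (∃ v, _root_.IsUniversal G v) ∨ ∀ v, ¬ IsEnabling G v := by
  have two_le : (∀ v, ¬ _root_.IsUniversal G v) → 2 ≤ Fintype.card V := by
    intro hnu
    obtain ⟨v0⟩ := hG.nonempty
    have h := hnu v0
    rw [_root_.IsUniversal] at h
    push_neg at h
    obtain ⟨u, hu, -⟩ := h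
    exact Fintype.one_lt_card_iff_nontrivial.mpr ⟨⟨u, v0, hu⟩⟩
  constructor
  · intro heq
    by_contra hcon
    push_neg at hcon
    obtain ⟨hnu, v, hv⟩ := hcon
    have h1 : Fintype.card V - 1 ≤ mu G := by
      have hle := le_mu (mv_compl_enabling hv)
      have hc : ({v}ᶜ : Set V).ncard = Fintype.card V - 1 := by
        rw [Set.compl_eq_univ_diff, Set.ncard_diff (Set.subset_univ _), Set.ncard_univ,
          Set.ncard_singleton, Nat.card_eq_fintype_card]
      rwa [hc] at hle
    have h2 : muT G ≤ Fintype.card V - 2 :=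
      muT_le hG fun X hX => tmv_card_le_of_no_universal hnu hX
    have h3 : 2 ≤ Fintype.card V := two_le hnu
    omega
  · rintro (⟨w, hw⟩ | hen)
    · exact le_antisymm (mu_le_muT_of_universal hw) (muT_le_mu hG)
    · have hnu : ∀ v, ¬ _root_.IsUniversal G v := fun v hv => hen v (fun u hu _ => hv u hu)
      have h3 : 2 ≤ Fintype.card V := two_le hnu
      obtain ⟨a, b, hab, hr⟩ := cograph_compl_not_connected hG hcog h3
      have hge : Fintype.card V - 2 ≤ muT G := by
        have hle := le_muT (tmv_big hr)
        have hc : ((({a, b} : Set V))ᶜ).ncard = Fintype.card V - 2 := by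
          rw [Set.compl_eq_univ_diff, Set.ncard_diff (Set.subset_univ _), Set.ncard_univ,
            Set.ncard_pair hab, Nat.card_eq_fintype_card]
        rwa [hc] at hle
      have hle : mu G ≤ Fintype.card V - 2 :=
        mu_le fun X hX => mv_card_le_of_no_enabling hen hX
      exact le_antisymm (le_trans hle hge) (muT_le_mu hG)
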